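/- Let L be a field, e ≥ 1, R = L[x]/(x^e), and M = R ⊕ R equipped with the R-bilinear symmetric pairing defined by ⟨(u₁,u₂),(v₁,v₂)⟩ = u₁v₂ − u₂v₁ viewed with values in R, composed with the L-linear functional taking the coefficient of x^{e−1}. Let 0 < a, b ≤ e and let W = x^a R ⊕ x^b R ⊆ M. Then the annihilator W^⊥ of W with respect to this pairing equals x^{e−b} R ⊕ x^{e−a} R. -/

import Mathlib

open Polynomial

/-- The truncated polynomial ring `L[x]/(x^e)`. -/
abbrev TruncPoly (L : Type*) [Field L] (e : ℕ) : Type _ := AdjoinRoot (X ^ e : L[X])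

/-- The image of the variable `x` in `L[x]/(x^e)`. -/
noncomputable abbrev tx (L : Type*) [Field L] (e : ℕ) : TruncPoly L e := AdjoinRoot.root _

/-- The `L`-linear functional on `L[x]/(x^e)` extracting the coefficient of `x^(e-1)`
(of the unique representative of degree `< e`). -/
noncomputable def coeffTop (L : Type*) [Field L] (e : ℕ) : TruncPoly L e →ₗ[L] L :=
  (Polynomial.lcoeff L (e - 1)).comp (AdjoinRoot.modByMonicHom (monic_X_pow e))

/-- The `L`-valued pairing `⟨(u₁,u₂),(v₁,v₂)⟩ = coeff_{x^(e-1)}(u₁v₂ − u₂v₁)`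
on `M = R ⊕ R`, `R = L[x]/(x^e)`. -/
noncomputable def pairL (L : Type*) [Field L] (e : ℕ)
    (m m' : TruncPoly L e × TruncPoly L e) : L :=
  coeffTop L e (m.1 * m'.2 - m.2 * m'.1)

lemma tx_pow_e (L : Type*) [Field L] (e : ℕ) : tx L e ^ e = 0 := by
  have : tx L e ^ e = AdjoinRoot.mk (X ^ e : L[X]) (X ^ e) := by
    simp [tx, ← AdjoinRoot.mk_X, map_pow]
  rw [this, AdjoinRoot.mk_self]

lemma coeff_modByMonic_X_pow {L : Type*} [Field L] (e i : ℕ) (hi : i < e) (p : L[X]) :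
    (p %ₘ X ^ e).coeff i = p.coeff i := by
  conv_rhs => rw [← modByMonic_add_div p (X ^ e)]
  rw [coeff_add, coeff_X_pow_mul']
  simp [Nat.not_le_of_lt hi]

lemma coeffTop_mk (L : Type*) [Field L] (e : ℕ) (p : L[X]) :
    coeffTop L e (AdjoinRoot.mk _ p) = (p %ₘ X ^ e).coeff (e - 1) := by
  simp [coeffTop, AdjoinRoot.modByMonicHom_mk]

/-- key nondegeneracy-type lemma: if `coeffTop (v * x^b * t) = 0` for all `t`,
then `v ∈ (x^(e-b))`. -/
lemma mem_span_of_forall_coeffTop {L : Type*} [Field L] {e b : ℕ} (hb' : b ≤ e)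
    {v : TruncPoly L e}
    (h : ∀ t : TruncPoly L e, coeffTop L e (v * tx L e ^ b * t) = 0) :
    v ∈ Ideal.span {tx L e ^ (e - b)} := by
  obtain ⟨p, rfl⟩ := AdjoinRoot.mk_surjective v
  have hmk : AdjoinRoot.mk (X ^ e : L[X]) (p %ₘ X ^ e) = AdjoinRoot.mk _ p := by
    rw [AdjoinRoot.mk_eq_mk]
    exact ⟨-(p /ₘ X ^ e), by
      have := modByMonic_add_div p (X ^ e); linear_combination this⟩
  have hdvd : (X : L[X]) ^ (e - b) ∣ p %ₘ X ^ e := by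
    rw [X_pow_dvd_iff]
    intro k hk
    have hke : k < e := lt_of_lt_of_le hk (Nat.sub_le e b)
    have := h (tx L e ^ (e - 1 - b - k))
    have htx : ∀ n : ℕ, tx L e ^ n = AdjoinRoot.mk (X ^ e : L[X]) (X ^ n) := by
      intro n; simp [tx, ← AdjoinRoot.mk_X, map_pow]
    rw [htx, htx, ← map_mul, ← map_mul, coeffTop_mk] at this
    have hexp : b + (e - 1 - b - k) = e - 1 - k := by omega
    rw [mul_assoc, ← pow_add, hexp] at this
    rw [coeff_modByMonic_X_pow e (e - 1) (by omega)] at this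
    have hco : (p * X ^ (e - 1 - k)).coeff (e - 1) = p.coeff k := by
      have := coeff_mul_X_pow p (e - 1 - k) k
      rwa [show k + (e - 1 - k) = e - 1 by omega] at this
    rw [hco] at this
    rw [coeff_modByMonic_X_pow e k hke]
    exact this
  obtain ⟨q, hq⟩ := hdvd
  rw [Ideal.mem_span_singleton, ← hmk, hq, map_mul, map_pow, AdjoinRoot.mk_X]
  exact Dvd.intro _ rfl

/-- For `W = x^a R ⊕ x^b R ⊆ R ⊕ R` with `0 < a, b ≤ e`, the annihilator of `W`
under the pairing is `x^(e-b) R ⊕ x^(e-a) R`. -/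
theorem annihilator_of_diagonal_submodule (L : Type*) [Field L] (e a b : ℕ)
    (he : 1 ≤ e) (ha : 0 < a) (ha' : a ≤ e) (hb : 0 < b) (hb' : b ≤ e) :
    {m : TruncPoly L e × TruncPoly L e |
        ∀ w ∈ (Submodule.prod (Ideal.span {tx L e ^ a}) (Ideal.span {tx L e ^ b}) :
          Submodule (TruncPoly L e) (TruncPoly L e × TruncPoly L e)), pairL L e m w = 0}
      = (Submodule.prod (Ideal.span {tx L e ^ (e - b)}) (Ideal.span {tx L e ^ (e - a)}) :
          Submodule (TruncPoly L e) (TruncPoly L e × TruncPoly L e)) := by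
  ext m
  simp only [Set.mem_setOf_eq, Submodule.mem_prod, SetLike.mem_coe]
  constructor
  · intro h
    constructor
    · apply mem_span_of_forall_coeffTop hb'
      intro t
      have := h (0, tx L e ^ b * t) ⟨Ideal.zero_mem _, Ideal.mem_span_singleton.2 ⟨t, rfl⟩⟩
      simpa [pairL, mul_assoc] using this
    · apply mem_span_of_forall_coeffTop ha'
      intro s
      have := h (tx L e ^ a * s, 0) ⟨Ideal.mem_span_singleton.2 ⟨s, rfl⟩, Ideal.zero_mem _⟩
      simp only [pairL] at this ⊢
      have h2 : coeffTop L e (-(m.2 * (tx L e ^ a * s))) = 0 := by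
        simpa using this
      rw [show m.2 * tx L e ^ a * s = -(-(m.2 * (tx L e ^ a * s))) by ring, map_neg, h2,
        neg_zero]
  · rintro ⟨h1, h2⟩ w ⟨hw1, hw2⟩
    rw [Ideal.mem_span_singleton] at h1 h2
    rw [Ideal.mem_span_singleton] at hw1 hw2
    obtain ⟨c1, hc1⟩ := h1
    obtain ⟨c2, hc2⟩ := h2
    obtain ⟨s, hs⟩ := hw1
    obtain ⟨t, ht⟩ := hw2
    have key : ∀ (c s : TruncPoly L e) (n : ℕ), n ≤ e →
        tx L e ^ (e - n) * c * (tx L e ^ n * s) = 0 := by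
      intro c s n hn
      have hx : tx L e ^ (e - n) * tx L e ^ n = 0 := by
        rw [← pow_add, show e - n + n = e by omega, tx_pow_e]
      rw [show tx L e ^ (e - n) * c * (tx L e ^ n * s)
        = tx L e ^ (e - n) * tx L e ^ n * (c * s) by ring, hx, zero_mul]
    have hz : m.1 * w.2 - m.2 * w.1 = 0 := by
      rw [hc1, hc2, hs, ht, key c1 t b hb', key c2 s a ha', sub_zero]
    simp [pairL, hz]
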